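/- (Flat two-dimensional spectrum of a Golay complementary array pair.) Let N, M ≥ 1 and let (U, V) be a Golay complementary array pair of unimodular N×M matrices. Then for all ψ_y, ψ_z ∈ ℝ, |F_U(ψ_y,ψ_z)|² + |F_V(ψ_y,ψ_z)|² = 2NM. -/

import Mathlib

/-- The one-dimensional array factor of a length-`M` sequence `u` at spatial
frequency `ψ`: `F_u(ψ) = Σ_{m=0}^{M-1} u(m) · exp(i·m·ψ)`. -/
noncomputable def arrayFactor (M : ℕ) (u : ℕ → ℂ) (ψ : ℝ) : ℂ :=
  ∑ m ∈ Finset.range M, u m * Complex.exp (Complex.I * (m : ℂ) * (ψ : ℂ))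

/-- The aperiodic autocorrelation of a length-`M` sequence `u` at shift `τ`:
`R_u(τ) = Σ_{m=0}^{M-1-τ} u(m) · conj(u(m+τ))`. -/
noncomputable def aacf (M : ℕ) (u : ℕ → ℂ) (τ : ℕ) : ℂ :=
  ∑ m ∈ Finset.range (M - τ), u m * (starRingEnd ℂ) (u (m + τ))

/-- The two-dimensional array factor of an `N×M` matrix `W` at `(ψ_y, ψ_z)`:
`F_W(ψ_y,ψ_z) = Σ_{n=0}^{N-1} Σ_{m=0}^{M-1} W(n,m) · exp(i·(n·ψ_z + m·ψ_y))`. -/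
noncomputable def arrayFactor2 (N M : ℕ) (W : ℕ → ℕ → ℂ) (ψy ψz : ℝ) : ℂ :=
  ∑ n ∈ Finset.range N, ∑ m ∈ Finset.range M,
    W n m * Complex.exp (Complex.I * ((n : ℂ) * (ψz : ℂ) + (m : ℂ) * (ψy : ℂ)))

/-- The two-dimensional aperiodic autocorrelation of an `N×M` matrix `W` at integer
shifts `(τ_n, τ_m)`: the sum of `W(n,m)·conj(W(n+τ_n, m+τ_m))` over all pairs
`(n,m)` with `0 ≤ n, n+τ_n ≤ N−1` and `0 ≤ m, m+τ_m ≤ M−1`. -/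
noncomputable def aacf2 (N M : ℕ) (W : ℕ → ℕ → ℂ) (τn τm : ℤ) : ℂ :=
  ∑ n ∈ Finset.range N, ∑ m ∈ Finset.range M,
    if 0 ≤ (n : ℤ) + τn ∧ (n : ℤ) + τn < (N : ℤ) ∧
        0 ≤ (m : ℤ) + τm ∧ (m : ℤ) + τm < (M : ℤ) then
      W n m * (starRingEnd ℂ) (W ((n : ℤ) + τn).toNat ((m : ℤ) + τm).toNat)
    else 0

/-- `(U, V)` is a Golay complementary array pair of `N×M` matrices: the sum of their
two-dimensional aperiodic autocorrelations vanishes at every nonzero shift. -/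
def IsGolayArrayPair (N M : ℕ) (U V : ℕ → ℕ → ℂ) : Prop :=
  ∀ τn τm : ℤ, |τn| ≤ (N : ℤ) - 1 → |τm| ≤ (M : ℤ) - 1 → ¬(τn = 0 ∧ τm = 0) →
    aacf2 N M U τn τm + aacf2 N M V τn τm = 0


open Finset Complex in
private lemma golay_key_lemma (N M : ℕ) (W : ℕ → ℕ → ℂ) (ψy ψz : ℝ) :
    arrayFactor2 N M W ψy ψz * (starRingEnd ℂ) (arrayFactor2 N M W ψy ψz) =
    ∑ τ ∈ (Finset.Icc (1 - (N:ℤ)) ((N:ℤ)-1)) ×ˢ (Finset.Icc (1 - (M:ℤ)) ((M:ℤ)-1)),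
      aacf2 N M W τ.1 τ.2 *
        Complex.exp (-Complex.I * ((τ.1 : ℂ) * (ψz:ℂ) + (τ.2 : ℂ) * (ψy:ℂ))) := by
  classical
  unfold arrayFactor2 aacf2
  simp only [← Finset.sum_product']
  rw [map_sum, Finset.sum_mul_sum]
  simp only [← Finset.sum_product']
  simp only [Finset.sum_mul, ite_mul, zero_mul]
  simp only [← Finset.sum_product']
  rw [← Finset.sum_filter]
  refine Finset.sum_nbij'
    (i := fun x => ((((x.2.1:ℤ) - x.1.1, (x.2.2:ℤ) - x.1.2), (x.1.1, x.1.2)) : (ℤ×ℤ)×(ℕ×ℕ)))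
    (j := fun a => (((a.2.1, a.2.2), (((a.2.1:ℤ) + a.1.1).toNat, ((a.2.2:ℤ) + a.1.2).toNat)) : (ℕ×ℕ)×(ℕ×ℕ)))
    ?_ ?_ ?_ ?_ ?_
  · intro x hx
    simp only [Finset.mem_product, Finset.mem_range, Finset.mem_filter, Finset.mem_Icc] at hx ⊢
    omega
  · intro a ha
    simp only [Finset.mem_product, Finset.mem_range, Finset.mem_filter, Finset.mem_Icc] at ha ⊢
    omega
  · intro x hx
    obtain ⟨⟨n, m⟩, n', m'⟩ := x
    simp only [Finset.mem_product, Finset.mem_range] at hx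
    simp only [Prod.mk.injEq, true_and, and_true]
    omega
  · intro a ha
    obtain ⟨⟨tn, tm⟩, n, m⟩ := a
    simp only [Finset.mem_product, Finset.mem_range, Finset.mem_filter, Finset.mem_Icc] at ha
    simp only [Prod.mk.injEq, true_and, and_true]
    omega
  · intro x hx
    simp only [Finset.mem_product, Finset.mem_range] at hx
    obtain ⟨⟨hn, hm⟩, hn', hm'⟩ := hx
    have e1 : ((x.1.1:ℤ) + ((x.2.1:ℤ) - x.1.1)).toNat = x.2.1 := by omega
    have e2 : ((x.1.2:ℤ) + ((x.2.2:ℤ) - x.1.2)).toNat = x.2.2 := by omega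
    rw [e1, e2]
    simp only [map_mul, ← Complex.exp_conj, map_add, Complex.conj_I, Complex.conj_ofReal,
      map_natCast, neg_mul]
    rw [mul_mul_mul_comm]
    congr 1
    rw [← Complex.exp_add]
    congr 1
    push_cast
    ring

private lemma aacf2_zero_of_unimodular (N M : ℕ) (W : ℕ → ℕ → ℂ)
    (h : ∀ n < N, ∀ m < M, ‖W n m‖ = 1) :
    aacf2 N M W 0 0 = (N : ℂ) * M := by
  calc aacf2 N M W 0 0 = ∑ _n ∈ Finset.range N, ∑ _m ∈ Finset.range M, (1:ℂ) := by
        unfold aacf2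
        refine Finset.sum_congr rfl fun n hn => Finset.sum_congr rfl fun m hm => ?_
        simp only [Finset.mem_range] at hn hm
        rw [if_pos (by omega)]
        simp only [add_zero, Int.toNat_natCast]
        rw [Complex.mul_conj, Complex.normSq_eq_norm_sq, h n hn m hm]
        norm_num
    _ = (N : ℂ) * M := by
        simp [Finset.sum_const, Finset.card_range, mul_comm]

/-- A Golay complementary array pair of unimodular `N×M` matrices has a spatially
flat sum two-dimensional power spectrum. -/
theorem golay_array_pair_flat_spectrum (N M : ℕ) (hN : 1 ≤ N) (hM : 1 ≤ M)
    (U V : ℕ → ℕ → ℂ)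
    (hU : ∀ n < N, ∀ m < M, ‖U n m‖ = 1)
    (hV : ∀ n < N, ∀ m < M, ‖V n m‖ = 1)
    (hGolay : IsGolayArrayPair N M U V) (ψy ψz : ℝ) :
    ‖arrayFactor2 N M U ψy ψz‖ ^ 2 +
        ‖arrayFactor2 N M V ψy ψz‖ ^ 2 = 2 * N * M := by
  have hmain : arrayFactor2 N M U ψy ψz * (starRingEnd ℂ) (arrayFactor2 N M U ψy ψz) +
      arrayFactor2 N M V ψy ψz * (starRingEnd ℂ) (arrayFactor2 N M V ψy ψz) =
      2 * (N : ℂ) * M := by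
    rw [golay_key_lemma N M U ψy ψz, golay_key_lemma N M V ψy ψz, ← Finset.sum_add_distrib]
    simp only [← add_mul]
    rw [Finset.sum_eq_single_of_mem ((0, 0) : ℤ × ℤ)]
    · rw [aacf2_zero_of_unimodular N M U hU, aacf2_zero_of_unimodular N M V hV]
      norm_num
      ring
    · simp only [Finset.mem_product, Finset.mem_Icc]
      omega
    · intro τ hτ hne
      simp only [Finset.mem_product, Finset.mem_Icc] at hτ
      rw [hGolay τ.1 τ.2 (abs_le.mpr ⟨by omega, by omega⟩) (abs_le.mpr ⟨by omega, by omega⟩)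
        (by rintro ⟨h1, h2⟩; exact hne (by simp [Prod.ext_iff, h1, h2])), zero_mul]
  rw [Complex.mul_conj, Complex.mul_conj] at hmain
  rw [Complex.sq_norm, Complex.sq_norm]
  exact_mod_cast hmain
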